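/- For every iteration index t ≥ 1, the probability (over the algorithm's randomness) of the event that T̂_i^{(k)} lies in the interval [(1−ε)·E_i[min(T_i, θ^{(k)})], (1+ε)·E_i[min(T_i, θ^{(k)})]] simultaneously for all k = 1, …, t is at least 1 − α. -/

import Mathlib

open MeasureTheory ProbabilityTheory Finset Set
open scoped ENNReal NNReal Classical

namespace LocalStationary

noncomputable section

/-- First return time (≥ 1) of a trajectory `f` to the state `i`, valued in `ℕ∞`
(it equals `⊤` if the trajectory never returns to `i`). -/
def hit {S : Type*} (i : S) (f : ℕ → S) : ℕ∞ :=
  sInf {n : ℕ∞ | ∃ m : ℕ, n = m ∧ 1 ≤ m ∧ f m = i}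

/-- Truncated return time `min(T_i, θ)` as a natural number. -/
def truncHit {S : Type*} (i : S) (θ : ℕ) (f : ℕ → S) : ℕ :=
  (min (hit i f) (θ : ℕ∞)).toNat

/-- Number of visits to `j` among the first `min(T_i, θ)` steps of the trajectory. -/
def visits {S : Type*} (i j : S) (θ : ℕ) (f : ℕ → S) : ℕ :=
  ((Finset.Icc 1 (truncHit i θ f)).filter fun s => f s = j).card

/-- A discrete-time time-homogeneous Markov chain on a state space `S`, described by
the laws `μ x` of its trajectories started at each state `x`, together with its
transition matrix `trans`. -/
structure Chain (S : Type*) [MeasurableSpace S] where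
  μ : S → Measure (ℕ → S)
  isProb : ∀ x, IsProbabilityMeasure (μ x)
  start : ∀ x, μ x {f | f 0 = x} = 1
  trans : S → S → ℝ≥0∞
  trans_sum : ∀ x, ∑' y, trans x y = 1
  markov : ∀ x (n : ℕ) (s : ℕ → S),
    μ x {f | ∀ k ≤ n + 1, f k = s k} =
      μ x {f | ∀ k ≤ n, f k = s k} * trans (s n) (s (n + 1))

namespace Chain

variable {S : Type*} [MeasurableSpace S]

/-- Irreducibility: from every state one can reach every other state. -/
def Irreducible (C : Chain S) : Prop :=
  ∀ x y : S, ∃ n : ℕ, 0 < C.μ x {f | f n = y}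

/-- Positive recurrence: the return time to each state is almost surely finite and
has finite expectation. -/
def PositiveRecurrent (C : Chain S) : Prop :=
  ∀ x : S, C.μ x {f | hit x f = ⊤} = 0 ∧
    Integrable (fun f => ((hit x f).toNat : ℝ)) (C.μ x)

/-- Aperiodicity: for each state, the only common divisor of the possible return
times is `1`. -/
def Aperiodic (C : Chain S) : Prop :=
  ∀ x : S, ∀ d : ℕ, (∀ n : ℕ, 1 ≤ n → 0 < C.μ x {f | f n = x} → d ∣ n) → d ∣ 1

/-- `E_x[T_i]`, the expected hitting time of `i` starting from `x`. -/
def ERet (C : Chain S) (x i : S) : ℝ :=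
  ∫ f, ((hit i f).toNat : ℝ) ∂ C.μ x

/-- The stationary probability `π_i = 1 / E_i[T_i]`. -/
def statPi (C : Chain S) (i : S) : ℝ := (C.ERet i i)⁻¹

/-- The truncated mean `E_i[min(T_i, θ)]`. -/
def EThat (C : Chain S) (i : S) (θ : ℕ) : ℝ :=
  ∫ f, (truncHit i θ f : ℝ) ∂ C.μ i

/-- `E_i[F̂_j] = E_i[Σ_{s=1}^{min(T_i,θ)} 1{X_s = j}]`. -/
def EVisits (C : Chain S) (i j : S) (θ : ℕ) : ℝ :=
  ∫ f, (visits i j θ f : ℝ) ∂ C.μ i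

/-- `P_i(T_i > k)`, as a real number. -/
def tailP (C : Chain S) (i : S) (k : ℕ) : ℝ :=
  (C.μ i {f | (k : ℕ∞) < hit i f}).toReal

/-- The maximal hitting time `H_i = max_x E_x[T_i]`. -/
def maxHit (C : Chain S) (i : S) : ℝ := ⨆ x : S, C.ERet x i

/-- Entry `Z_{jk} = Σ_{t=0}^∞ (P^{(t)}_{jk} − π_k)` of the fundamental matrix. -/
def Zfun (C : Chain S) (j k : S) : ℝ :=
  ∑' t : ℕ, ((C.μ j {f | f t = k}).toReal - C.statPi k)

/-- `Z_max(i) = max_k |Z_{ki}|`. -/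
def Zmax (C : Chain S) (i : S) : ℝ := ⨆ k : S, |C.Zfun k i|

end Chain


/-- The randomness of the local algorithm with anchor node `i` and parameters `ε`, `α`,
run on the chain `C`: a probability space carrying, for every iteration `t` and sample
index `k`, an independent sample trajectory `path t k` of the chain started at `i`,
together with the sample numbers `N^{(t)}`, empirical truncated return times `T̂^{(t)}`
and truncated fractions `p̂^{(t)}`, with `θ^{(t)} = 2^t`. -/
structure Algo {S : Type*} [MeasurableSpace S] (C : Chain S) (i : S) (ε α : ℝ)
    (Ω : Type*) [MeasurableSpace Ω] where
  vol : Measure Ω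
  isProb : IsProbabilityMeasure vol
  path : ℕ → ℕ → Ω → (ℕ → S)
  meas_path : ∀ t k, Measurable (path t k)
  law_path : ∀ t k, vol.map (path t k) = C.μ i
  indep_path : iIndepFun (fun p : ℕ × ℕ => path p.1 p.2) vol
  Nsamp : ℕ → Ω → ℕ
  That : ℕ → Ω → ℝ
  phat : ℕ → Ω → ℝ
  hThat : ∀ t ω, That t ω =
    (Nsamp t ω : ℝ)⁻¹ * ∑ k ∈ Finset.range (Nsamp t ω), (truncHit i (2 ^ t) (path t k ω) : ℝ)
  hphat : ∀ t ω, phat t ω = (Nsamp t ω : ℝ)⁻¹ *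
    ∑ k ∈ Finset.range (Nsamp t ω),
      (if ((2 ^ t : ℕ) : ℕ∞) < hit i (path t k ω) then (1 : ℝ) else 0)
  hN1 : ∀ ω, Nsamp 1 ω = ⌈6 * (1 + ε) * Real.log (8 / α) / ε ^ 2⌉₊
  hNsucc : ∀ t ω, 1 ≤ t → Nsamp (t + 1) ω =
    ⌈3 * (1 + ε) * (2 ^ (t + 1) : ℝ) * Real.log (4 * (2 ^ (t + 1) : ℝ) / α) /
      (That t ω * ε ^ 2)⌉₊

namespace Algo

variable {S : Type*} [MeasurableSpace S] {C : Chain S} {i : S} {ε α : ℝ}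
  {Ω : Type*} [MeasurableSpace Ω]

/-- The estimate `F̂_j^{(t)}` of the visit frequency to an observer node `j`. -/
def Fhat (A : Algo C i ε α Ω) (j : S) (t : ℕ) (ω : Ω) : ℝ :=
  (A.Nsamp t ω : ℝ)⁻¹ *
    ∑ k ∈ Finset.range (A.Nsamp t ω), (visits i j (2 ^ t) (A.path t k ω) : ℝ)

/-- Termination condition at iteration `t`: (a) `π̂^{(t)} < Δ/(1+ε)`, or
(b) `p̂^{(t)} π̂^{(t)} < εΔ`, where `π̂^{(t)} = 1/T̂^{(t)}`. -/
def stops (A : Algo C i ε α Ω) (Δ : ℝ) (t : ℕ) (ω : Ω) : Prop :=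
  (A.That t ω)⁻¹ < Δ / (1 + ε) ∨ A.phat t ω * (A.That t ω)⁻¹ < ε * Δ

/-- The terminal iteration `t_max` of the algorithm. -/
def tmax (A : Algo C i ε α Ω) (Δ : ℝ) (ω : Ω) : ℕ :=
  sInf {t : ℕ | 1 ≤ t ∧ A.stops Δ t ω}

end Algo


/-! ### Auxiliary lemmas for `statement0` -/

section Aux

variable {S : Type*} {i : S} {f : ℕ → S}

lemma hit_le {m : ℕ} (hm : 1 ≤ m) (hf : f m = i) : hit i f ≤ m :=
  sInf_le ⟨m, rfl, hm, hf⟩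

lemma one_le_hit (i : S) (f : ℕ → S) : 1 ≤ hit i f := by
  refine le_sInf ?_
  rintro n ⟨m, rfl, hm1, -⟩
  exact_mod_cast hm1

lemma lt_hit {N : ℕ} (h : ∀ m : ℕ, 1 ≤ m → m ≤ N → f m ≠ i) : (N : ℕ∞) < hit i f := by
  have : ((N + 1 : ℕ) : ℕ∞) ≤ hit i f := by
    refine le_sInf ?_
    rintro n ⟨m, rfl, hm1, hfm⟩
    have : N + 1 ≤ m := by
      by_contra hc
      exact h m hm1 (by omega) hfm
    exact_mod_cast this
  calc (N : ℕ∞) < ((N + 1 : ℕ) : ℕ∞) := by exact_mod_cast Nat.lt_succ_self N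
    _ ≤ _ := this

lemma truncHit_le (i : S) (θ : ℕ) (f : ℕ → S) : truncHit i θ f ≤ θ := by
  have := ENat.toNat_le_toNat (min_le_right (hit i f) (θ : ℕ∞)) (by simp)
  simp at this; exact this

lemma one_le_truncHit (i : S) {θ : ℕ} (hθ : 1 ≤ θ) (f : ℕ → S) : 1 ≤ truncHit i θ f := by
  have h1 : (1 : ℕ∞) ≤ min (hit i f) (θ : ℕ∞) :=
    le_min (one_le_hit i f) (by exact_mod_cast hθ)
  have h2 : min (hit i f) (θ : ℕ∞) ≠ ⊤ :=
    ne_top_of_le_ne_top (by simp) (min_le_right _ _)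
  have := ENat.toNat_le_toNat h1 h2
  simp at this; exact this

lemma truncHit_mono (i : S) {θ θ' : ℕ} (h : θ ≤ θ') (f : ℕ → S) :
    truncHit i θ f ≤ truncHit i θ' f := by
  refine ENat.toNat_le_toNat (min_le_min le_rfl (by exact_mod_cast h))
    (ne_top_of_le_ne_top (by simp) (min_le_right _ _))

lemma sum_ite_lt (h : ℕ∞) (θ : ℕ) :
    (∑ m ∈ Finset.range θ, if (m : ℕ∞) < h then 1 else 0) = (min h (θ : ℕ∞)).toNat := by
  induction θ with
  | zero => norm_num
  | succ θ ih =>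
    rw [Finset.sum_range_succ, ih]
    by_cases hc : (θ : ℕ∞) < h
    · have h1 : ((θ + 1 : ℕ) : ℕ∞) ≤ h := by
        have := (ENat.add_one_le_iff (show (θ : ℕ∞) ≠ ⊤ by simp)).mpr hc
        simpa [Nat.cast_add] using this
      rw [if_pos hc]
      have hminθ : min h (θ : ℕ∞) = (θ : ℕ∞) := min_eq_right hc.le
      have hminθ1 : min h ((θ + 1 : ℕ) : ℕ∞) = ((θ + 1 : ℕ) : ℕ∞) := min_eq_right h1
      rw [hminθ, hminθ1]
      norm_cast
    · push_neg at hc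
      rw [if_neg (by exact_mod_cast not_lt.mpr hc)]
      have h1 : min h (θ : ℕ∞) = h := min_eq_left hc
      have h2 : min h ((θ + 1 : ℕ) : ℕ∞) = h :=
        min_eq_left (le_trans hc (by exact_mod_cast Nat.le_succ θ))
      rw [h1, h2, add_zero]

lemma truncHit_eq_sum (i : S) (θ : ℕ) (f : ℕ → S) :
    truncHit i θ f = ∑ m ∈ Finset.range θ,
      if ∀ j : ℕ, 1 ≤ j → j ≤ m → f j ≠ i then 1 else 0 := by
  have hiff : ∀ m : ℕ, (∀ j : ℕ, 1 ≤ j → j ≤ m → f j ≠ i) ↔ (m : ℕ∞) < hit i f := by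
    intro m
    constructor
    · exact lt_hit
    · intro hm j hj1 hjm hfj
      have := hit_le hj1 hfj
      have : hit i f ≤ (m : ℕ∞) := le_trans this (by exact_mod_cast hjm)
      exact absurd hm (not_lt.mpr this)
  calc truncHit i θ f = (min (hit i f) (θ : ℕ∞)).toNat := rfl
    _ = ∑ m ∈ Finset.range θ, if (m : ℕ∞) < hit i f then 1 else 0 := (sum_ite_lt _ _).symm
    _ = _ := by
      refine Finset.sum_congr rfl fun m _ => ?_
      by_cases hc : (m : ℕ∞) < hit i f
      · rw [if_pos hc, if_pos ((hiff m).mpr hc)]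
      · rw [if_neg hc, if_neg fun hh => hc ((hiff m).mp hh)]

lemma measurable_truncHit [MeasurableSpace S] [MeasurableSingletonClass S] (i : S) (θ : ℕ) :
    Measurable fun f : ℕ → S => truncHit i θ f := by
  have heq : (fun f : ℕ → S => truncHit i θ f) = fun f => ∑ m ∈ Finset.range θ,
      if ∀ j : ℕ, 1 ≤ j → j ≤ m → f j ≠ i then 1 else 0 := by
    funext f; exact truncHit_eq_sum i θ f
  rw [heq]
  refine Finset.measurable_sum _ fun m _ => Measurable.ite ?_ measurable_const measurable_const
  have : {f : ℕ → S | ∀ j : ℕ, 1 ≤ j → j ≤ m → f j ≠ i}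
      = ⋂ j ∈ Finset.Icc 1 m, ((fun f : ℕ → S => f j) ⁻¹' {i})ᶜ := by
    ext f
    simp only [Set.mem_setOf_eq, Set.mem_iInter, Finset.mem_Icc, Set.mem_compl_iff,
      Set.mem_preimage, Set.mem_singleton_iff]
    exact ⟨fun h j hj => h j hj.1 hj.2, fun h j h1 h2 => h j ⟨h1, h2⟩⟩
  show MeasurableSet _
  rw [this]
  exact MeasurableSet.biInter (Finset.Icc 1 m).countable_toSet
    fun j _ => ((measurable_pi_apply j) (measurableSet_singleton i)).compl

lemma measurable_truncHit_real [MeasurableSpace S] [MeasurableSingletonClass S] (i : S) (θ : ℕ) :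
    Measurable fun f : ℕ → S => (truncHit i θ f : ℝ) :=
  measurable_from_top.comp (measurable_truncHit i θ)

section ChainLemmas

variable [MeasurableSpace S] [MeasurableSingletonClass S] (C : Chain S)

lemma integrable_truncHit (i : S) (θ : ℕ) :
    Integrable (fun f => (truncHit i θ f : ℝ)) (C.μ i) := by
  haveI := C.isProb i
  refine (integrable_const (θ : ℝ)).mono'
    (measurable_truncHit_real i θ).aestronglyMeasurable (ae_of_all _ fun f => ?_)
  rw [Real.norm_of_nonneg (by positivity)]
  exact_mod_cast truncHit_le i θ f

lemma one_le_EThat (i : S) {θ : ℕ} (hθ : 1 ≤ θ) : 1 ≤ C.EThat i θ := by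
  haveI := C.isProb i
  have h1 : (1 : ℝ) = ∫ _, (1 : ℝ) ∂ C.μ i := by simp
  rw [Chain.EThat, h1]
  refine integral_mono (integrable_const 1) (integrable_truncHit C i θ) fun f => ?_
  exact Nat.one_le_cast.mpr (one_le_truncHit i hθ f)

lemma EThat_le (i : S) (θ : ℕ) : C.EThat i θ ≤ θ := by
  haveI := C.isProb i
  have h1 : (θ : ℝ) = ∫ _, (θ : ℝ) ∂ C.μ i := by simp
  rw [Chain.EThat, h1]
  refine integral_mono (integrable_truncHit C i θ) (integrable_const _) fun f => ?_
  exact Nat.cast_le.mpr (truncHit_le i θ f)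

lemma EThat_mono (i : S) {θ θ' : ℕ} (h : θ ≤ θ') : C.EThat i θ ≤ C.EThat i θ' := by
  refine integral_mono (integrable_truncHit C i θ) (integrable_truncHit C i θ') fun f => ?_
  exact Nat.cast_le.mpr (truncHit_mono i h f)

lemma integrable_exp_truncHit (i : S) (θ : ℕ) (s : ℝ) :
    Integrable (fun f => Real.exp (s * (truncHit i θ f : ℝ))) (C.μ i) := by
  haveI := C.isProb i
  refine (integrable_const (Real.exp (|s| * θ))).mono'
    (((measurable_truncHit_real i θ).const_mul s).exp).aestronglyMeasurable
    (ae_of_all _ fun f => ?_)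
  rw [Real.norm_of_nonneg (Real.exp_pos _).le, Real.exp_le_exp]
  calc s * (truncHit i θ f : ℝ) ≤ |s| * (truncHit i θ f : ℝ) := by
        refine mul_le_mul_of_nonneg_right (le_abs_self s) (by positivity)
    _ ≤ |s| * θ := by
        refine mul_le_mul_of_nonneg_left ?_ (abs_nonneg s)
        exact_mod_cast truncHit_le i θ f

lemma exp_le_convex {x b s : ℝ} (hx0 : 0 ≤ x) (hxb : x ≤ b) (hb : 0 < b) :
    Real.exp (s * x) ≤ 1 + x * (Real.exp (s * b) - 1) / b := by
  have ha : 0 ≤ x / b := by positivity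
  have hb' : 0 ≤ 1 - x / b := by
    rw [sub_nonneg, div_le_one hb]; exact hxb
  have hab : x / b + (1 - x / b) = 1 := by ring
  have := convexOn_exp.2 (Set.mem_univ (s * b)) (Set.mem_univ 0) ha hb' hab
  simp only [smul_eq_mul, mul_zero, add_zero, Real.exp_zero, mul_one] at this
  have harg : x / b * (s * b) = s * x := by field_simp
  rw [harg] at this
  calc Real.exp (s * x) ≤ x / b * Real.exp (s * b) + (1 - x / b) := this
    _ = 1 + x * (Real.exp (s * b) - 1) / b := by field_simp; ring

lemma mgf_truncHit_le (i : S) {θ : ℕ} (hθ : 1 ≤ θ) (s : ℝ) :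
    mgf (fun f => (truncHit i θ f : ℝ)) (C.μ i) s ≤
      Real.exp (C.EThat i θ * (Real.exp (s * θ) - 1) / θ) := by
  haveI := C.isProb i
  have hθR : (0 : ℝ) < θ := by exact_mod_cast hθ
  set c : ℝ := (Real.exp (s * θ) - 1) / θ with hc
  have hpt : ∀ f : ℕ → S, Real.exp (s * (truncHit i θ f : ℝ)) ≤
      1 + (truncHit i θ f : ℝ) * c := by
    intro f
    have := exp_le_convex (x := (truncHit i θ f : ℝ)) (b := (θ : ℝ)) (s := s)
      (by positivity) (by exact_mod_cast truncHit_le i θ f) hθR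
    calc Real.exp (s * (truncHit i θ f : ℝ))
        ≤ 1 + (truncHit i θ f : ℝ) * (Real.exp (s * θ) - 1) / θ := this
      _ = 1 + (truncHit i θ f : ℝ) * c := by rw [hc]; ring
  have hint : Integrable (fun f => 1 + (truncHit i θ f : ℝ) * c) (C.μ i) :=
    (integrable_const 1).add ((integrable_truncHit C i θ).mul_const c)
  have h1 : mgf (fun f => (truncHit i θ f : ℝ)) (C.μ i) s ≤
      ∫ f, (1 + (truncHit i θ f : ℝ) * c) ∂ C.μ i := by
    rw [mgf]
    exact integral_mono (integrable_exp_truncHit C i θ s) hint hpt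
  have h2 : ∫ f, (1 + (truncHit i θ f : ℝ) * c) ∂ C.μ i = 1 + C.EThat i θ * c := by
    rw [integral_add (integrable_const 1) ((integrable_truncHit C i θ).mul_const c),
      integral_const, integral_mul_const]
    simp [Chain.EThat]
  have h3 : (1 : ℝ) + C.EThat i θ * c ≤ Real.exp (C.EThat i θ * c) := by
    have := Real.add_one_le_exp (C.EThat i θ * c)
    linarith
  calc mgf _ (C.μ i) s ≤ 1 + C.EThat i θ * c := h1.trans_eq h2
    _ ≤ Real.exp (C.EThat i θ * c) := h3
    _ = Real.exp (C.EThat i θ * (Real.exp (s * θ) - 1) / θ) := by rw [hc]; ring_nf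

end ChainLemmas



lemma log_one_add_ge (x : ℝ) (hx : 0 ≤ x) : 2 * x / (2 + x) ≤ Real.log (1 + x) := by
  have key : MonotoneOn (fun y : ℝ => Real.log (1 + y) - 2 * y / (2 + y)) (Ici 0) := by
    refine monotoneOn_of_hasDerivWithinAt_nonneg (convex_Ici 0)
      (f' := fun y => (1 + y)⁻¹ - 4 / (2 + y) ^ 2) ?_ ?_ ?_
    · refine ContinuousOn.sub ?_ ?_
      · exact (Real.continuousOn_log.comp (by fun_prop)
          (fun y hy => by simp only [Set.mem_Ici] at hy; intro h; simp at h; linarith))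
      · exact ContinuousOn.div (by fun_prop) (by fun_prop)
          (fun y hy => by simp only [Set.mem_Ici] at hy; positivity)
    · intro y hy
      rw [interior_Ici] at hy
      simp only [Set.mem_Ioi] at hy
      have h1 : (1 : ℝ) + y ≠ 0 := by linarith
      have h2 : (2 : ℝ) + y ≠ 0 := by linarith
      have d1 : HasDerivAt (fun y : ℝ => Real.log (1 + y)) (1 + y)⁻¹ y := by
        have := (Real.hasDerivAt_log h1).comp y ((hasDerivAt_id y).const_add 1)
        simpa [Function.comp_def] using this
      have d2 : HasDerivAt (fun y : ℝ => 2 * y / (2 + y)) (4 / (2 + y) ^ 2) y := by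
        have := ((hasDerivAt_id y).const_mul 2).div ((hasDerivAt_id y).const_add 2) h2
        refine this.congr_deriv ?_
        simp only [id]
        field_simp
        ring
      exact (d1.sub d2).hasDerivWithinAt
    · intro y hy
      rw [interior_Ici] at hy
      simp only [Set.mem_Ioi] at hy
      rw [sub_nonneg, div_le_iff₀ (by positivity), inv_mul_eq_div, le_div_iff₀ (by positivity)]
      nlinarith
  have h0 : (fun y : ℝ => Real.log (1 + y) - 2 * y / (2 + y)) 0 = 0 := by norm_num
  have := key (self_mem_Ici) (show x ∈ Ici (0:ℝ) from hx) hx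
  rw [h0] at this
  linarith [this]

lemma chernoff_ineq_upper {e : ℝ} (h0 : 0 < e) (h1 : e ≤ 1) :
    e ^ 2 / 3 ≤ (1 + e) * Real.log (1 + e) - e := by
  have h := log_one_add_ge e h0.le
  have h2 : (1 + e) * (2 * e / (2 + e)) - e = e ^ 2 / (2 + e) := by
    field_simp
    ring
  have h3 : e ^ 2 / (2 + e) ≥ e ^ 2 / 3 := by
    apply div_le_div_of_nonneg_left (by positivity) (by linarith) (by linarith)
  nlinarith [mul_le_mul_of_nonneg_left h (by linarith : (0:ℝ) ≤ 1 + e)]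

lemma chernoff_ineq_lower {e : ℝ} (h0 : 0 < e) (h1 : e < 1) :
    e ^ 2 / 3 ≤ (1 - e) * Real.log (1 - e) + e := by
  have key : MonotoneOn (fun y : ℝ => (1 - y) * Real.log (1 - y) + y - y ^ 2 / 2) (Ico 0 1) := by
    refine monotoneOn_of_hasDerivWithinAt_nonneg (convex_Ico 0 1)
      (f' := fun y => -Real.log (1 - y) - y) ?_ ?_ ?_
    · refine ContinuousOn.sub (ContinuousOn.add (ContinuousOn.mul (by fun_prop) ?_)
        continuousOn_id) (by fun_prop)
      exact Real.continuousOn_log.comp (by fun_prop)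
        (fun y hy => by simp only [Set.mem_Ico] at hy; intro h; simp at h; linarith [hy.2])
    · intro y hy
      rw [interior_Ico] at hy
      simp only [Set.mem_Ioo] at hy
      have h1 : (1 : ℝ) - y ≠ 0 := by linarith [hy.2]
      have dsub : HasDerivAt (fun y : ℝ => 1 - y) (-1) y := by
        simpa using (hasDerivAt_id y).const_sub 1
      have d1 : HasDerivAt (fun y : ℝ => Real.log (1 - y)) (-(1 - y)⁻¹) y := by
        have := (Real.hasDerivAt_log h1).comp y dsub
        refine this.congr_deriv ?_
        ring
      have d2 : HasDerivAt (fun y : ℝ => (1 - y) * Real.log (1 - y))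
          ((-1) * Real.log (1 - y) + (1 - y) * (-(1 - y)⁻¹)) y := by
        have d875 : HasDerivAt (fun y : ℝ => 1 - y) (-1) y := by
          simpa using (hasDerivAt_id y).const_sub 1
        exact d875.mul d1
      have d3 : HasDerivAt (fun y : ℝ => (1 - y) * Real.log (1 - y) + y - y ^ 2 / 2)
          ((-1) * Real.log (1 - y) + (1 - y) * (-(1 - y)⁻¹) + 1 - y) y := by
        have dy : HasDerivAt (fun y : ℝ => y ^ 2 / 2) y y := by
          have := (hasDerivAt_pow 2 y).div_const 2
          simpa using this
        exact ((d2.add (hasDerivAt_id y)).sub dy)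
      have harith : (-1) * Real.log (1 - y) + (1 - y) * (-(1 - y)⁻¹) + 1 - y
          = -Real.log (1 - y) - y := by
        field_simp
        ring
      rw [harith] at d3
      exact d3.hasDerivWithinAt
    · intro y hy
      rw [interior_Ico] at hy
      simp only [Set.mem_Ioo] at hy
      have := Real.log_le_sub_one_of_pos (show (0:ℝ) < 1 - y by linarith [hy.2])
      show (0:ℝ) ≤ -Real.log (1 - y) - y
      linarith
  have h0' : (fun y : ℝ => (1 - y) * Real.log (1 - y) + y - y ^ 2 / 2) 0 = 0 := by norm_num
  have hmem : e ∈ Ico (0:ℝ) 1 := ⟨h0.le, h1⟩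
  have := key (left_mem_Ico.mpr one_pos) hmem h0.le
  rw [h0'] at this
  nlinarith [this]


end Aux

section AlgoAux

variable {S : Type*} [MeasurableSpace S] [MeasurableSingletonClass S] {C : Chain S} {i : S}
  {ε α : ℝ} {Ω : Type*} [MeasurableSpace Ω]

/-- The real-valued truncated return time samples of the algorithm. -/
def Yv (A : Algo C i ε α Ω) (p : ℕ × ℕ) (ω : Ω) : ℝ :=
  (truncHit i (2 ^ p.1) (A.path p.1 p.2 ω) : ℝ)

/-- Sum of the first `n` samples of iteration `t`. -/
def Sn (A : Algo C i ε α Ω) (t n : ℕ) (ω : Ω) : ℝ :=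
  ∑ k ∈ Finset.range n, Yv A (t, k) ω

variable (A : Algo C i ε α Ω)

lemma measurable_Yv (p : ℕ × ℕ) : Measurable (Yv A p) :=
  (measurable_truncHit_real i (2 ^ p.1)).comp (A.meas_path p.1 p.2)

lemma measurable_Sn (t n : ℕ) : Measurable (Sn A t n) :=
  Finset.measurable_sum _ fun k _ => measurable_Yv A (t, k)

lemma iIndepFun_Yv : iIndepFun (Yv A) A.vol := by
  have := A.indep_path.comp (fun p : ℕ × ℕ => fun f : ℕ → S => (truncHit i (2 ^ p.1) f : ℝ))
    (fun p => measurable_truncHit_real i (2 ^ p.1))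
  exact this

lemma Yv_nonneg (p : ℕ × ℕ) (ω : Ω) : 0 ≤ Yv A p ω := by
  simp [Yv]

lemma Yv_le (p : ℕ × ℕ) (ω : Ω) : Yv A p ω ≤ (2 : ℝ) ^ p.1 := by
  have := truncHit_le i (2 ^ p.1) (A.path p.1 p.2 ω)
  unfold Yv
  exact_mod_cast this

lemma mgf_Yv (p : ℕ × ℕ) (s : ℝ) :
    mgf (Yv A p) A.vol s = mgf (fun f => (truncHit i (2 ^ p.1) f : ℝ)) (C.μ i) s := by
  rw [mgf, mgf, ← A.law_path p.1 p.2,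
    integral_map (A.meas_path p.1 p.2).aemeasurable
      (((measurable_truncHit_real i (2 ^ p.1)).const_mul s).exp).aestronglyMeasurable]
  rfl

lemma integrable_exp_Sn (t n : ℕ) (s : ℝ) :
    Integrable (fun ω => Real.exp (s * Sn A t n ω)) A.vol := by
  haveI := A.isProb
  refine (integrable_const (Real.exp (|s| * (n * 2 ^ t)))).mono'
    (((measurable_Sn A t n).const_mul s).exp).aestronglyMeasurable (ae_of_all _ fun ω => ?_)
  rw [Real.norm_of_nonneg (Real.exp_pos _).le, Real.exp_le_exp]
  have hSn0 : 0 ≤ Sn A t n ω := Finset.sum_nonneg fun k _ => Yv_nonneg A (t, k) ω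
  have hSnle : Sn A t n ω ≤ n * 2 ^ t := by
    calc Sn A t n ω ≤ ∑ _k ∈ Finset.range n, (2 : ℝ) ^ t :=
          Finset.sum_le_sum fun k _ => Yv_le A (t, k) ω
      _ = n * 2 ^ t := by simp [mul_comm]
  calc s * Sn A t n ω ≤ |s| * Sn A t n ω := mul_le_mul_of_nonneg_right (le_abs_self s) hSn0
    _ ≤ |s| * (n * 2 ^ t) := mul_le_mul_of_nonneg_left hSnle (abs_nonneg s)

lemma mgf_Sn_le (t n : ℕ) (ht : 1 ≤ t) (s : ℝ) :
    mgf (Sn A t n) A.vol s ≤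
      Real.exp (n * (C.EThat i (2 ^ t) *
        (Real.exp (s * ((2 ^ t : ℕ) : ℝ)) - 1) / ((2 ^ t : ℕ) : ℝ))) := by
  classical
  have hemb : Function.Injective (fun k : ℕ => ((t, k) : ℕ × ℕ)) := by
    intro a b hab; simpa using congrArg Prod.snd hab
  have hsum : Sn A t n = ∑ p ∈ (Finset.range n).map ⟨_, hemb⟩, Yv A p := by
    funext ω
    rw [Finset.sum_map]
    simp [Sn, Finset.sum_apply]
  rw [hsum, (iIndepFun_Yv A).mgf_sum (measurable_Yv A)]
  have hbound : ∀ p ∈ (Finset.range n).map ⟨_, hemb⟩,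
      mgf (Yv A p) A.vol s ≤ Real.exp (C.EThat i (2 ^ t) *
        (Real.exp (s * ((2 ^ t : ℕ) : ℝ)) - 1) / ((2 ^ t : ℕ) : ℝ)) := by
    intro p hp
    obtain ⟨k, _, rfl⟩ := Finset.mem_map.mp hp
    simp only [Function.Embedding.coeFn_mk]
    rw [mgf_Yv A (t, k) s]
    exact mgf_truncHit_le C i (Nat.one_le_two_pow) s
  calc ∏ p ∈ (Finset.range n).map ⟨_, hemb⟩, mgf (Yv A p) A.vol s
      ≤ ∏ _p ∈ (Finset.range n).map ⟨_, hemb⟩,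
          Real.exp (C.EThat i (2 ^ t) *
            (Real.exp (s * ((2 ^ t : ℕ) : ℝ)) - 1) / ((2 ^ t : ℕ) : ℝ)) :=
        Finset.prod_le_prod (fun p _ => mgf_nonneg) hbound
    _ = Real.exp (C.EThat i (2 ^ t) *
          (Real.exp (s * ((2 ^ t : ℕ) : ℝ)) - 1) / ((2 ^ t : ℕ) : ℝ)) ^ n := by
        rw [Finset.prod_const, Finset.card_map, Finset.card_range]
    _ = _ := by rw [← Real.exp_nat_mul]

lemma chernoff_upper (hε : ε ∈ Set.Ioo (0 : ℝ) 1) (t n : ℕ) (ht : 1 ≤ t) :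
    (A.vol {ω | (1 + ε) * n * C.EThat i (2 ^ t) ≤ Sn A t n ω}).toReal ≤
      Real.exp (-(n * C.EThat i (2 ^ t) * ε ^ 2) / (3 * 2 ^ t)) := by
  haveI := A.isProb
  set θR : ℝ := (2 : ℝ) ^ t with hθR
  have hθpos : 0 < θR := by positivity
  set μE : ℝ := C.EThat i (2 ^ t) with hμE
  have hμEpos : (0 : ℝ) < μE := lt_of_lt_of_le one_pos (one_le_EThat C i Nat.one_le_two_pow)
  set s : ℝ := Real.log (1 + ε) / θR with hs
  have hs0 : 0 ≤ s := div_nonneg (Real.log_nonneg (by linarith [hε.1])) hθpos.le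
  have hsθ : s * θR = Real.log (1 + ε) := by rw [hs]; field_simp
  have hexp : Real.exp (s * θR) = 1 + ε := by
    rw [hsθ, Real.exp_log (by linarith [hε.1])]
  have hθcast : ((2 ^ t : ℕ) : ℝ) = θR := by push_cast; rfl
  have key := measure_ge_le_exp_mul_mgf (μ := A.vol) (X := Sn A t n)
    ((1 + ε) * n * μE) hs0 (integrable_exp_Sn A t n s)
  have key2 := mgf_Sn_le A t n ht s
  rw [hθcast] at key2
  have hmulle : Real.exp (-s * ((1 + ε) * n * μE)) * mgf (Sn A t n) A.vol s ≤
      Real.exp (-s * ((1 + ε) * n * μE)) * Real.exp (n * (μE * (Real.exp (s * θR) - 1) / θR)) := by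
    refine mul_le_mul_of_nonneg_left ?_ (Real.exp_pos _).le
    exact key2
  have heq : Real.exp (-s * ((1 + ε) * n * μE)) * Real.exp (n * (μE * (Real.exp (s * θR) - 1) / θR))
      = Real.exp (-(n * μE / θR) * ((1 + ε) * Real.log (1 + ε) - ε)) := by
    rw [← Real.exp_add, hexp]
    congr 1
    rw [← hsθ]
    field_simp
    ring
  have hineq := chernoff_ineq_upper hε.1 hε.2.le
  have hfinal : Real.exp (-(n * μE / θR) * ((1 + ε) * Real.log (1 + ε) - ε)) ≤
      Real.exp (-(n * μE * ε ^ 2) / (3 * θR)) := by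
    rw [Real.exp_le_exp]
    have hnm : (0 : ℝ) ≤ n * μE / θR := by positivity
    calc -(n * μE / θR) * ((1 + ε) * Real.log (1 + ε) - ε)
        ≤ -(n * μE / θR) * (ε ^ 2 / 3) := by
          rw [neg_mul, neg_mul, neg_le_neg_iff]
          exact mul_le_mul_of_nonneg_left hineq hnm
      _ = -(n * μE * ε ^ 2) / (3 * θR) := by
          rw [neg_mul, div_mul_div_comm, mul_comm θR 3, ← neg_div]
  calc (A.vol {ω | (1 + ε) * n * μE ≤ Sn A t n ω}).toReal
      ≤ Real.exp (-s * ((1 + ε) * n * μE)) * mgf (Sn A t n) A.vol s := key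
    _ ≤ _ := hmulle.trans (heq.le.trans hfinal)

lemma chernoff_lower (hε : ε ∈ Set.Ioo (0 : ℝ) 1) (t n : ℕ) (ht : 1 ≤ t) :
    (A.vol {ω | Sn A t n ω ≤ (1 - ε) * n * C.EThat i (2 ^ t)}).toReal ≤
      Real.exp (-(n * C.EThat i (2 ^ t) * ε ^ 2) / (3 * 2 ^ t)) := by
  haveI := A.isProb
  set θR : ℝ := (2 : ℝ) ^ t with hθR
  have hθpos : 0 < θR := by positivity
  set μE : ℝ := C.EThat i (2 ^ t) with hμE
  have hμEpos : (0 : ℝ) < μE := lt_of_lt_of_le one_pos (one_le_EThat C i Nat.one_le_two_pow)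
  set s : ℝ := Real.log (1 - ε) / θR with hs
  have h1ε : (0 : ℝ) < 1 - ε := by linarith [hε.2]
  have hs0 : s ≤ 0 := div_nonpos_of_nonpos_of_nonneg
    (Real.log_nonpos (by linarith) (by linarith [hε.1])) hθpos.le
  have hsθ : s * θR = Real.log (1 - ε) := by rw [hs]; field_simp
  have hexp : Real.exp (s * θR) = 1 - ε := by rw [hsθ, Real.exp_log h1ε]
  have hθcast : ((2 ^ t : ℕ) : ℝ) = θR := by push_cast; rfl
  have key := measure_le_le_exp_mul_mgf (μ := A.vol) (X := Sn A t n)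
    ((1 - ε) * n * μE) hs0 (integrable_exp_Sn A t n s)
  have key2 := mgf_Sn_le A t n ht s
  rw [hθcast] at key2
  have hmulle : Real.exp (-s * ((1 - ε) * n * μE)) * mgf (Sn A t n) A.vol s ≤
      Real.exp (-s * ((1 - ε) * n * μE)) * Real.exp (n * (μE * (Real.exp (s * θR) - 1) / θR)) := by
    refine mul_le_mul_of_nonneg_left ?_ (Real.exp_pos _).le
    exact key2
  have heq : Real.exp (-s * ((1 - ε) * n * μE)) * Real.exp (n * (μE * (Real.exp (s * θR) - 1) / θR))
      = Real.exp (-(n * μE / θR) * ((1 - ε) * Real.log (1 - ε) + ε)) := by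
    rw [← Real.exp_add, hexp]
    congr 1
    rw [← hsθ]
    field_simp
    ring
  have hineq := chernoff_ineq_lower hε.1 hε.2
  have hfinal : Real.exp (-(n * μE / θR) * ((1 - ε) * Real.log (1 - ε) + ε)) ≤
      Real.exp (-(n * μE * ε ^ 2) / (3 * θR)) := by
    rw [Real.exp_le_exp]
    have hnm : (0 : ℝ) ≤ n * μE / θR := by positivity
    calc -(n * μE / θR) * ((1 - ε) * Real.log (1 - ε) + ε)
        ≤ -(n * μE / θR) * (ε ^ 2 / 3) := by
          rw [neg_mul, neg_mul, neg_le_neg_iff]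
          exact mul_le_mul_of_nonneg_left hineq hnm
      _ = -(n * μE * ε ^ 2) / (3 * θR) := by
          rw [neg_mul, div_mul_div_comm, mul_comm θR 3, ← neg_div]
  calc (A.vol {ω | Sn A t n ω ≤ (1 - ε) * n * μE}).toReal
      ≤ Real.exp (-s * ((1 - ε) * n * μE)) * mgf (Sn A t n) A.vol s := key
    _ ≤ _ := hmulle.trans (heq.le.trans hfinal)

lemma dev_bound (hε : ε ∈ Set.Ioo (0 : ℝ) 1) (t n : ℕ) (ht : 1 ≤ t) :
    A.vol {ω | Sn A t n ω ∉
        Set.Icc ((1 - ε) * n * C.EThat i (2 ^ t)) ((1 + ε) * n * C.EThat i (2 ^ t))} ≤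
      ENNReal.ofReal (2 * Real.exp (-(n * C.EThat i (2 ^ t) * ε ^ 2) / (3 * 2 ^ t))) := by
  haveI := A.isProb
  set μE : ℝ := C.EThat i (2 ^ t) with hμE
  have hsub : {ω | Sn A t n ω ∉ Set.Icc ((1 - ε) * n * μE) ((1 + ε) * n * μE)} ⊆
      {ω | Sn A t n ω ≤ (1 - ε) * n * μE} ∪ {ω | (1 + ε) * n * μE ≤ Sn A t n ω} := by
    intro ω hω
    simp only [Set.mem_setOf_eq, Set.mem_Icc, not_and_or, not_le] at hω
    rcases hω with h | h
    · exact Or.inl h.le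
    · exact Or.inr h.le
  calc A.vol {ω | Sn A t n ω ∉ Set.Icc ((1 - ε) * n * μE) ((1 + ε) * n * μE)}
      ≤ A.vol ({ω | Sn A t n ω ≤ (1 - ε) * n * μE} ∪ {ω | (1 + ε) * n * μE ≤ Sn A t n ω}) :=
        measure_mono hsub
    _ ≤ A.vol {ω | Sn A t n ω ≤ (1 - ε) * n * μE} + A.vol {ω | (1 + ε) * n * μE ≤ Sn A t n ω} :=
        measure_union_le _ _
    _ ≤ ENNReal.ofReal (Real.exp (-(n * μE * ε ^ 2) / (3 * 2 ^ t)))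
        + ENNReal.ofReal (Real.exp (-(n * μE * ε ^ 2) / (3 * 2 ^ t))) := by
        gcongr
        · rw [← ENNReal.ofReal_toReal (measure_ne_top A.vol _)]
          exact ENNReal.ofReal_le_ofReal (chernoff_lower A hε t n ht)
        · rw [← ENNReal.ofReal_toReal (measure_ne_top A.vol _)]
          exact ENNReal.ofReal_le_ofReal (chernoff_upper A hε t n ht)
    _ = ENNReal.ofReal (2 * Real.exp (-(n * μE * ε ^ 2) / (3 * 2 ^ t))) := by
        rw [← ENNReal.ofReal_add (Real.exp_pos _).le (Real.exp_pos _).le]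
        congr 1
        ring

end AlgoAux

section AlgoMain

variable {S : Type*} [MeasurableSpace S] [MeasurableSingletonClass S] {C : Chain S} {i : S}
  {ε α : ℝ} {Ω : Type*} [MeasurableSpace Ω]

/-- σ-algebra generated by the paths of iterations `≤ j`. -/
def Falg (A : Algo C i ε α Ω) (j : ℕ) : MeasurableSpace Ω :=
  ⨆ p ∈ {p : ℕ × ℕ | p.1 ≤ j}, MeasurableSpace.comap (A.path p.1 p.2) inferInstance

/-- σ-algebra generated by the paths of iteration `t`. -/
def Galg (A : Algo C i ε α Ω) (t : ℕ) : MeasurableSpace Ω :=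
  ⨆ p ∈ {p : ℕ × ℕ | p.1 = t}, MeasurableSpace.comap (A.path p.1 p.2) inferInstance

variable (A : Algo C i ε α Ω)

lemma Falg_le (j : ℕ) : Falg A j ≤ ‹MeasurableSpace Ω› :=
  iSup₂_le fun p _ => (A.meas_path p.1 p.2).comap_le

lemma Galg_le (t : ℕ) : Galg A t ≤ ‹MeasurableSpace Ω› :=
  iSup₂_le fun p _ => (A.meas_path p.1 p.2).comap_le

lemma Falg_mono {j j' : ℕ} (h : j ≤ j') : Falg A j ≤ Falg A j' :=
  iSup₂_le fun p hp =>
    le_iSup₂ (f := fun (p : ℕ × ℕ) (_ : p ∈ {p : ℕ × ℕ | p.1 ≤ j'}) =>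
      MeasurableSpace.comap (A.path p.1 p.2) inferInstance) p (le_trans hp h)

lemma measurable_path_Falg {j : ℕ} {p : ℕ × ℕ} (hp : p.1 ≤ j) :
    Measurable[Falg A j] (A.path p.1 p.2) :=
  Measurable.of_comap_le (le_iSup₂ (f := fun (p : ℕ × ℕ) (_ : p ∈ {p : ℕ × ℕ | p.1 ≤ j}) =>
    MeasurableSpace.comap (A.path p.1 p.2) inferInstance) p hp)

lemma measurable_path_Galg {t : ℕ} (k : ℕ) :
    Measurable[Galg A t] (A.path t k) :=
  Measurable.of_comap_le (le_iSup₂ (f := fun (p : ℕ × ℕ) (_ : p ∈ {p : ℕ × ℕ | p.1 = t}) =>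
    MeasurableSpace.comap (A.path p.1 p.2) inferInstance) (t, k) rfl)

lemma measurable_Yv_Falg {j t k : ℕ} (h : t ≤ j) :
    Measurable[Falg A j] (Yv A (t, k)) :=
  ((measurable_truncHit_real i (2 ^ t)).mono le_rfl le_rfl).comp
    (measurable_path_Falg A (p := (t, k)) h)

lemma measurable_Yv_Galg (t k : ℕ) :
    Measurable[Galg A t] (Yv A (t, k)) :=
  (measurable_truncHit_real i (2 ^ t)).comp (measurable_path_Galg A k)

lemma measurable_Sn_Galg (t n : ℕ) : Measurable[Galg A t] (Sn A t n) :=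
  Finset.measurable_sum _ fun k _ => measurable_Yv_Galg A t k

lemma indep_FG (j t : ℕ) (hjt : j < t) : Indep (Falg A j) (Galg A t) A.vol := by
  have h := (iIndepFun_iff_iIndep _ _ _).1 A.indep_path
  have h2 := indep_iSup_of_disjoint (m := fun p : ℕ × ℕ =>
      MeasurableSpace.comap (A.path p.1 p.2) inferInstance)
    (fun p : ℕ × ℕ => (A.meas_path p.1 p.2).comap_le) h
    (S := {p : ℕ × ℕ | p.1 ≤ j}) (T := {p : ℕ × ℕ | p.1 = t})
    (by
      rw [Set.disjoint_left]
      rintro p hp rfl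
      exact absurd hp (not_le.mpr hjt))
  exact h2

/-- Composition of a countably-valued measurable function with a measurable family. -/
lemma measurable_comp_nat {β : Type*} [MeasurableSpace β] {m : MeasurableSpace Ω}
    {N : Ω → ℕ} {F : ℕ → Ω → β}
    (hN : Measurable[m] N) (hF : ∀ n, Measurable[m] (F n)) :
    Measurable[m] fun ω => F (N ω) ω := by
  intro s hs
  have hpre : (fun ω => F (N ω) ω) ⁻¹' s = ⋃ n : ℕ, ({ω | N ω = n} ∩ F n ⁻¹' s) := by
    ext ω
    simp only [Set.mem_preimage, Set.mem_iUnion, Set.mem_inter_iff, Set.mem_setOf_eq]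
    constructor
    · intro h
      exact ⟨N ω, rfl, h⟩
    · rintro ⟨n, hn, h⟩
      rw [hn]
      exact h
  rw [hpre]
  exact MeasurableSet.iUnion fun n => (hN (measurableSet_singleton n)).inter (hF n hs)

lemma measurable_That_aux {m : MeasurableSpace Ω} {N : Ω → ℕ} {T : Ω → ℝ} {Y : ℕ → Ω → ℝ}
    (hfun : ∀ ω, T ω = ((N ω : ℝ))⁻¹ * ∑ k ∈ Finset.range (N ω), Y k ω)
    (hN : Measurable[m] N) (hY : ∀ k : ℕ, Measurable[m] (Y k)) :
    Measurable[m] T := by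
  have : T = fun ω =>
      (fun (n : ℕ) => fun ω' => ((n : ℝ))⁻¹ * ∑ k ∈ Finset.range n, Y k ω') (N ω) ω :=
    funext fun ω => hfun ω
  rw [this]
  exact measurable_comp_nat
    (F := fun (n : ℕ) (ω' : Ω) => ((n : ℝ))⁻¹ * ∑ k ∈ Finset.range n, Y k ω') hN
    (fun n => (Finset.measurable_sum _ fun k _ => hY k).const_mul _)

lemma meas_rec : ∀ t : ℕ, 1 ≤ t →
    Measurable[Falg A t] (A.That t) ∧ Measurable[Falg A t] (fun ω => A.Nsamp (t + 1) ω) := by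
  intro t
  induction t with
  | zero => intro h; exact absurd h (by norm_num)
  | succ t ih =>
    intro _
    have hY : ∀ k : ℕ, Measurable[Falg A (t + 1)] (Yv A (t + 1, k)) :=
      fun k => measurable_Yv_Falg A le_rfl
    have hN : Measurable[Falg A (t + 1)] fun ω => A.Nsamp (t + 1) ω := by
      rcases Nat.eq_zero_or_pos t with rfl | htpos
      · have h1 : (fun ω => A.Nsamp 1 ω) =
            fun _ω => ⌈6 * (1 + ε) * Real.log (8 / α) / ε ^ 2⌉₊ :=
          funext fun ω => A.hN1 ω
        rw [h1]
        exact measurable_const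
      · exact ((ih htpos).2).mono (Falg_mono A (Nat.le_succ t)) le_rfl
    have hT : Measurable[Falg A (t + 1)] (A.That (t + 1)) :=
      measurable_That_aux (fun ω => by rw [A.hThat (t + 1) ω]; simp only [Yv]) hN hY
    refine ⟨hT, ?_⟩
    have hfun : (fun ω => A.Nsamp (t + 1 + 1) ω) = fun ω =>
        ⌈3 * (1 + ε) * (2 ^ (t + 1 + 1) : ℝ) * Real.log (4 * (2 ^ (t + 1 + 1) : ℝ) / α) /
          (A.That (t + 1) ω * ε ^ 2)⌉₊ :=
      funext fun ω => A.hNsucc (t + 1) ω (by omega)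
    rw [hfun]
    exact Nat.measurable_ceil.comp (measurable_const.div (hT.mul_const _))

/-- The "good" event at iteration `k`. -/
def GoodSet (A : Algo C i ε α Ω) (k : ℕ) : Set Ω :=
  {ω | A.That k ω ∈ Set.Icc ((1 - ε) * C.EThat i (2 ^ k)) ((1 + ε) * C.EThat i (2 ^ k))}

/-- The deviation event for the sum of `n` samples of iteration `k`. -/
def DevSet (A : Algo C i ε α Ω) (k n : ℕ) : Set Ω :=
  {ω | Sn A k n ω ∉
    Set.Icc ((1 - ε) * n * C.EThat i (2 ^ k)) ((1 + ε) * n * C.EThat i (2 ^ k))}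

lemma GoodSet_meas_Falg {k : ℕ} (hk : 1 ≤ k) : MeasurableSet[Falg A k] (GoodSet A k) :=
  (meas_rec A k hk).1 measurableSet_Icc

lemma DevSet_meas_Galg (k n : ℕ) : MeasurableSet[Galg A k] (DevSet A k n) :=
  ((measurable_Sn_Galg A k n) measurableSet_Icc).compl

lemma Sn_not_Icc {k n : ℕ} {ω : Ω} (hn : 1 ≤ n) (hNs : A.Nsamp k ω = n)
    (h : ω ∉ GoodSet A k) : ω ∈ DevSet A k n := by
  intro hmem
  apply h
  have hThat : A.That k ω = (n : ℝ)⁻¹ * Sn A k n ω := by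
    rw [A.hThat k ω, hNs]
    simp only [Sn, Yv]
  have hnpos : (0 : ℝ) < n := by exact_mod_cast hn
  obtain ⟨hl, hu⟩ := hmem
  constructor
  · rw [hThat, le_inv_mul_iff₀ hnpos]
    calc (n : ℝ) * ((1 - ε) * C.EThat i (2 ^ k)) = (1 - ε) * n * C.EThat i (2 ^ k) := by ring
      _ ≤ Sn A k n ω := hl
  · rw [hThat, inv_mul_le_iff₀ hnpos]
    calc Sn A k n ω ≤ (1 + ε) * n * C.EThat i (2 ^ k) := hu
      _ = (n : ℝ) * ((1 + ε) * C.EThat i (2 ^ k)) := by ring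

lemma base_bound (hε : ε ∈ Set.Ioo (0 : ℝ) 1) (hα : α ∈ Set.Ioo (0 : ℝ) 1) :
    A.vol (GoodSet A 1)ᶜ ≤ ENNReal.ofReal (α / 4) := by
  haveI := A.isProb
  have h1ε : (0 : ℝ) < 1 + ε := by linarith [hε.1]
  set μ1 : ℝ := C.EThat i (2 ^ 1) with hμ1def
  have hμ1 : 1 ≤ μ1 := one_le_EThat C i (by norm_num)
  have hlog : 0 < Real.log (8 / α) := by
    refine Real.log_pos ?_
    rw [lt_div_iff₀ hα.1]
    linarith [hα.2]
  have hval : 0 < 6 * (1 + ε) * Real.log (8 / α) / ε ^ 2 :=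
    div_pos (mul_pos (mul_pos (by norm_num) h1ε) hlog) (pow_pos hε.1 2)
  set n1 : ℕ := ⌈6 * (1 + ε) * Real.log (8 / α) / ε ^ 2⌉₊ with hn1def
  have hn1pos : 1 ≤ n1 := Nat.ceil_pos.mpr hval
  have hn1ge : 6 * (1 + ε) * Real.log (8 / α) / ε ^ 2 ≤ (n1 : ℝ) := Nat.le_ceil _
  have hsub : (GoodSet A 1)ᶜ ⊆ DevSet A 1 n1 := fun ω hω =>
    Sn_not_Icc A hn1pos (A.hN1 ω) hω
  have hexp : 2 * Real.exp (-((n1 : ℝ) * μ1 * ε ^ 2) / (3 * 2 ^ 1)) ≤ α / 4 := by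
    have harg : Real.log (8 / α) ≤ ((n1 : ℝ) * μ1 * ε ^ 2) / (3 * 2 ^ 1) := by
      have h1 : 6 * (1 + ε) * Real.log (8 / α) ≤ (n1 : ℝ) * ε ^ 2 := by
        rw [div_le_iff₀ (pow_pos hε.1 2)] at hn1ge
        linarith
      have h2 : (n1 : ℝ) * ε ^ 2 ≤ (n1 : ℝ) * μ1 * ε ^ 2 := by
        have : (n1 : ℝ) * ε ^ 2 * 1 ≤ ((n1 : ℝ) * ε ^ 2) * μ1 := by
          refine mul_le_mul_of_nonneg_left hμ1 (by positivity)
        calc (n1 : ℝ) * ε ^ 2 = (n1 : ℝ) * ε ^ 2 * 1 := by ring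
          _ ≤ (n1 : ℝ) * ε ^ 2 * μ1 := this
          _ = (n1 : ℝ) * μ1 * ε ^ 2 := by ring
      rw [le_div_iff₀ (by norm_num : (0:ℝ) < 3 * 2 ^ 1)]
      nlinarith [hlog, hε.1]
    have hmono : Real.exp (-((n1 : ℝ) * μ1 * ε ^ 2) / (3 * 2 ^ 1)) ≤
        Real.exp (-Real.log (8 / α)) := by
      rw [Real.exp_le_exp, neg_div]
      exact neg_le_neg harg
    have hexplog : Real.exp (-Real.log (8 / α)) = α / 8 := by
      rw [Real.exp_neg, Real.exp_log (div_pos (by norm_num) hα.1), inv_div]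
    calc 2 * Real.exp (-((n1 : ℝ) * μ1 * ε ^ 2) / (3 * 2 ^ 1))
        ≤ 2 * (α / 8) := by linarith [hmono, hexplog.le, hexplog.ge]
      _ = α / 4 := by ring
  calc A.vol (GoodSet A 1)ᶜ ≤ A.vol (DevSet A 1 n1) := measure_mono hsub
    _ ≤ ENNReal.ofReal (2 * Real.exp (-((n1 : ℝ) * μ1 * ε ^ 2) / (3 * 2 ^ 1))) :=
        dev_bound A hε 1 n1 le_rfl
    _ ≤ ENNReal.ofReal (α / 4) := ENNReal.ofReal_le_ofReal hexp

lemma step_bound (hε : ε ∈ Set.Ioo (0 : ℝ) 1) (hα : α ∈ Set.Ioo (0 : ℝ) 1)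
    (j : ℕ) (hj : 1 ≤ j) :
    A.vol (GoodSet A j ∩ (GoodSet A (j + 1))ᶜ) ≤ ENNReal.ofReal (α / 2 ^ (j + 2)) := by
  haveI := A.isProb
  have h1ε : (0 : ℝ) < 1 + ε := by linarith [hε.1]
  set μj : ℝ := C.EThat i (2 ^ j) with hμjdef
  set μk : ℝ := C.EThat i (2 ^ (j + 1)) with hμkdef
  have hμj1 : 1 ≤ μj := one_le_EThat C i Nat.one_le_two_pow
  have hμk1 : 1 ≤ μk := one_le_EThat C i Nat.one_le_two_pow
  have hμjk : μj ≤ μk := EThat_mono C i (Nat.pow_le_pow_right (by norm_num) (Nat.le_succ j))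
  set θ : ℝ := (2 : ℝ) ^ (j + 1) with hθdef
  have hθpos : 0 < θ := by positivity
  set L : ℝ := Real.log (4 * θ / α) with hLdef
  have hL : 0 < L := by
    refine Real.log_pos ?_
    rw [lt_div_iff₀ hα.1]
    have : (1 : ℝ) ≤ θ := one_le_pow₀ (by norm_num)
    nlinarith [hα.2]
  set mk : ℝ := 3 * θ * L / (μk * ε ^ 2) with hmkdef
  have hmkpos : 0 < mk :=
    div_pos (mul_pos (mul_pos (by norm_num) hθpos) hL)
      (mul_pos (by linarith) (pow_pos hε.1 2))
  set Prev : ℕ → Set Ω := fun n => GoodSet A j ∩ {ω | A.Nsamp (j + 1) ω = n} with hPrevdef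
  have hPrev_measF : ∀ n, MeasurableSet[Falg A j] (Prev n) := fun n =>
    (GoodSet_meas_Falg A hj).inter ((meas_rec A j hj).2 (measurableSet_singleton n))
  have hPrev_meas : ∀ n, MeasurableSet (Prev n) := fun n => Falg_le A j _ (hPrev_measF n)
  -- positivity of That j on GoodSet
  have hThat_pos : ∀ ω ∈ GoodSet A j, 0 < A.That j ω := by
    intro ω hω
    have := hω.1
    have h1 : (0 : ℝ) < (1 - ε) * μj := mul_pos (by linarith [hε.2]) (by linarith)
    linarith
  have hThat_le : ∀ ω ∈ GoodSet A j, A.That j ω ≤ (1 + ε) * μk := by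
    intro ω hω
    calc A.That j ω ≤ (1 + ε) * μj := hω.2
      _ ≤ (1 + ε) * μk := by nlinarith
  -- the subset decomposition
  have hsub : GoodSet A j ∩ (GoodSet A (j + 1))ᶜ ⊆
      ⋃ n : ℕ, (Prev n ∩ DevSet A (j + 1) n) := by
    rintro ω ⟨hg, hb⟩
    refine Set.mem_iUnion.mpr ⟨A.Nsamp (j + 1) ω, ⟨hg, rfl⟩, ?_⟩
    have hnum : 0 < 3 * (1 + ε) * (2 ^ (j + 1) : ℝ) * Real.log (4 * (2 ^ (j + 1) : ℝ) / α) /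
        (A.That j ω * ε ^ 2) := by
      refine div_pos ?_ (mul_pos (hThat_pos ω hg) (pow_pos hε.1 2))
      have : (4 : ℝ) * (2 ^ (j + 1) : ℝ) / α = 4 * θ / α := by rw [hθdef]
      refine mul_pos (mul_pos (mul_pos (by norm_num) h1ε) hθpos) ?_
      rw [this]
      exact hL
    have hn1 : 1 ≤ A.Nsamp (j + 1) ω := by
      rw [A.hNsucc j ω hj]
      exact Nat.ceil_pos.mpr hnum
    exact Sn_not_Icc A hn1 rfl hb
  -- bound each term
  have hterm : ∀ n : ℕ, A.vol (Prev n ∩ DevSet A (j + 1) n) ≤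
      A.vol (Prev n) * ENNReal.ofReal (α / 2 ^ (j + 2)) := by
    intro n
    rcases Set.eq_empty_or_nonempty (Prev n) with he | ⟨ω₀, hω₀⟩
    · calc A.vol (Prev n ∩ DevSet A (j + 1) n)
          ≤ A.vol (Prev n) := measure_mono Set.inter_subset_left
        _ = 0 := by rw [he, measure_empty]
        _ ≤ _ := zero_le
    · -- on a nonempty Prev n, n is at least mk
      obtain ⟨hg₀, hN₀⟩ := hω₀
      have hTpos := hThat_pos ω₀ hg₀
      have hTle := hThat_le ω₀ hg₀
      have hμkpos : (0 : ℝ) < μk := lt_of_lt_of_le one_pos hμk1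
      have hnge : mk ≤ (n : ℝ) := by
        rw [Set.mem_setOf_eq] at hN₀
        have hceil : A.Nsamp (j + 1) ω₀ =
            ⌈3 * (1 + ε) * (2 ^ (j + 1) : ℝ) * Real.log (4 * (2 ^ (j + 1) : ℝ) / α) /
              (A.That j ω₀ * ε ^ 2)⌉₊ := A.hNsucc j ω₀ hj
        have hv : 3 * (1 + ε) * (2 ^ (j + 1) : ℝ) * Real.log (4 * (2 ^ (j + 1) : ℝ) / α) /
            (A.That j ω₀ * ε ^ 2) ≤ (n : ℝ) := by
          rw [← hN₀, hceil]
          exact Nat.le_ceil _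
        have hbridge : 3 * (1 + ε) * θ * L / (A.That j ω₀ * ε ^ 2) =
            3 * (1 + ε) * (2 ^ (j + 1) : ℝ) * Real.log (4 * (2 ^ (j + 1) : ℝ) / α) /
              (A.That j ω₀ * ε ^ 2) := by
          rw [hθdef, hLdef]
        have hdenom : A.That j ω₀ * ε ^ 2 ≤ (1 + ε) * μk * ε ^ 2 :=
          mul_le_mul_of_nonneg_right hTle (sq_nonneg ε)
        have h3 : 3 * (1 + ε) * θ * L / ((1 + ε) * μk * ε ^ 2) ≤
            3 * (1 + ε) * θ * L / (A.That j ω₀ * ε ^ 2) :=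
          div_le_div_of_nonneg_left
            (mul_pos (mul_pos (mul_pos (by norm_num) h1ε) hθpos) hL).le
            (mul_pos hTpos (pow_pos hε.1 2)) hdenom
        have hmk_eq : mk = 3 * (1 + ε) * θ * L / ((1 + ε) * μk * ε ^ 2) := by
          rw [hmkdef]
          rw [div_eq_div_iff (mul_pos hμkpos (pow_pos hε.1 2)).ne'
            (mul_pos (mul_pos h1ε hμkpos) (pow_pos hε.1 2)).ne']
          ring
        calc mk = 3 * (1 + ε) * θ * L / ((1 + ε) * μk * ε ^ 2) := hmk_eq
          _ ≤ 3 * (1 + ε) * θ * L / (A.That j ω₀ * ε ^ 2) := h3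
          _ = _ := hbridge
          _ ≤ (n : ℝ) := hv
      have hn1 : 1 ≤ n := by
        by_contra hc
        push_neg at hc
        interval_cases n
        simp only [Nat.cast_zero] at hnge
        linarith
      -- deviation bound
      have hdev : A.vol (DevSet A (j + 1) n) ≤ ENNReal.ofReal (α / 2 ^ (j + 2)) := by
        refine le_trans (dev_bound A hε (j + 1) n (by omega)) (ENNReal.ofReal_le_ofReal ?_)
        have hargle : L ≤ ((n : ℝ) * μk * ε ^ 2) / (3 * θ) := by
          rw [le_div_iff₀ (mul_pos (by norm_num) hθpos)]
          have : mk * (μk * ε ^ 2) = 3 * θ * L := by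
            rw [hmkdef, div_mul_cancel₀ _ (mul_pos (lt_of_lt_of_le one_pos hμk1)
              (pow_pos hε.1 2)).ne']
          nlinarith [hnge, mul_pos (mul_pos (by norm_num : (0:ℝ) < 3) hθpos) hL,
            mul_pos (show (0:ℝ) < μk by linarith) (pow_pos hε.1 2)]
        have hmono : Real.exp (-((n : ℝ) * μk * ε ^ 2) / (3 * θ)) ≤ Real.exp (-L) := by
          rw [Real.exp_le_exp, neg_div]
          exact neg_le_neg hargle
        have hexplog : Real.exp (-L) = α / (4 * θ) := by
          rw [hLdef, Real.exp_neg, Real.exp_log (div_pos (mul_pos (by norm_num) hθpos) hα.1),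
            inv_div]
        have h2θ : (2 : ℝ) ^ (j + 2) = 2 * θ := by
          rw [hθdef]
          ring
        calc 2 * Real.exp (-((n : ℝ) * μk * ε ^ 2) / (3 * 2 ^ (j + 1)))
            = 2 * Real.exp (-((n : ℝ) * μk * ε ^ 2) / (3 * θ)) := by rw [hθdef]
          _ ≤ 2 * (α / (4 * θ)) := by
              rw [← hexplog]
              linarith [hmono]
          _ = α / 2 ^ (j + 2) := by
              rw [h2θ]
              have hθne : θ ≠ 0 := hθpos.ne'
              field_simp
              ring
      have hindep := (Indep_iff _ _ _).1 (indep_FG A j (j + 1) (Nat.lt_succ_self j))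
        (Prev n) (DevSet A (j + 1) n) (hPrev_measF n) (DevSet_meas_Galg A (j + 1) n)
      calc A.vol (Prev n ∩ DevSet A (j + 1) n)
          = A.vol (Prev n) * A.vol (DevSet A (j + 1) n) := hindep
        _ ≤ A.vol (Prev n) * ENNReal.ofReal (α / 2 ^ (j + 2)) := mul_le_mul_right hdev _
  -- put everything together
  have hdisj : Pairwise (Function.onFun Disjoint Prev) := by
    intro n m hnm
    refine Set.disjoint_left.mpr ?_
    rintro ω ⟨-, h1⟩ ⟨-, h2⟩
    rw [Set.mem_setOf_eq] at h1 h2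
    exact hnm (h1.symm.trans h2)
  have htsum : (∑' n : ℕ, A.vol (Prev n)) ≤ 1 := by
    rw [← measure_iUnion hdisj hPrev_meas]
    exact prob_le_one
  calc A.vol (GoodSet A j ∩ (GoodSet A (j + 1))ᶜ)
      ≤ A.vol (⋃ n : ℕ, (Prev n ∩ DevSet A (j + 1) n)) := measure_mono hsub
    _ ≤ ∑' n : ℕ, A.vol (Prev n ∩ DevSet A (j + 1) n) := measure_iUnion_le _
    _ ≤ ∑' n : ℕ, A.vol (Prev n) * ENNReal.ofReal (α / 2 ^ (j + 2)) :=
        ENNReal.tsum_le_tsum hterm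
    _ = (∑' n : ℕ, A.vol (Prev n)) * ENNReal.ofReal (α / 2 ^ (j + 2)) :=
        ENNReal.tsum_mul_right
    _ ≤ 1 * ENNReal.ofReal (α / 2 ^ (j + 2)) := mul_le_mul_left htsum _
    _ = ENNReal.ofReal (α / 2 ^ (j + 2)) := one_mul _

lemma geom_sum_bound (hα0 : 0 ≤ α) : ∀ m : ℕ,
    (∑ j ∈ Finset.Icc 1 m, α / 2 ^ (j + 2)) ≤ α / 4 - α / 2 ^ (m + 2) := by
  intro m
  induction m with
  | zero => norm_num
  | succ m ih =>
    rw [Finset.sum_Icc_succ_top (by omega : 1 ≤ m + 1)]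
    have hpow : (2 : ℝ) ^ (m + 3) = 2 * 2 ^ (m + 2) := by ring
    have h1 : α / 2 ^ (m + 2) = 2 * (α / 2 ^ (m + 1 + 2)) := by
      rw [show m + 1 + 2 = m + 3 by omega, hpow]
      rw [mul_div_assoc']
      rw [mul_comm (2:ℝ) (2 ^ (m + 2))]
      rw [← div_div]
      rw [mul_div_assoc]
      rw [mul_div_cancel_left₀ _ (two_ne_zero)]
    have h2 : (0 : ℝ) ≤ α / 2 ^ (m + 1 + 2) := by positivity
    linarith

end AlgoMain

/-- Lemma 3 of the paper. For every iteration index `t ≥ 1`, with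
probability at least `1 − α` over the algorithm's randomness, simultaneously for all
`k = 1, …, t` the estimate `T̂_i^{(k)}` lies within a `(1 ± ε)` multiplicative interval
around `E_i[min(T_i, θ^{(k)})]`. -/
theorem statement0 {S : Type*} [MeasurableSpace S] [MeasurableSingletonClass S] [Countable S]
    (C : Chain S) (hirr : C.Irreducible) (hrec : C.PositiveRecurrent)
    (i : S) (ε α : ℝ) (hε : ε ∈ Set.Ioo (0 : ℝ) 1) (hα : α ∈ Set.Ioo (0 : ℝ) 1)
    {Ω : Type*} [MeasurableSpace Ω] (A : Algo C i ε α Ω)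
    (t : ℕ) (ht : 1 ≤ t) :
    1 - α ≤ (A.vol {ω | ∀ k, 1 ≤ k → k ≤ t →
      A.That k ω ∈ Set.Icc ((1 - ε) * C.EThat i (2 ^ k)) ((1 + ε) * C.EThat i (2 ^ k))}).toReal := by
  classical
  haveI := A.isProb
  set E : Set Ω := {ω | ∀ k, 1 ≤ k → k ≤ t →
      A.That k ω ∈ Set.Icc ((1 - ε) * C.EThat i (2 ^ k)) ((1 + ε) * C.EThat i (2 ^ k))}
    with hEdef
  have hEinter : E = ⋂ k ∈ Finset.Icc 1 t, GoodSet A k := by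
    ext ω
    simp only [hEdef, Set.mem_setOf_eq, Set.mem_iInter, Finset.mem_Icc, GoodSet]
    exact ⟨fun h k hk => h k hk.1 hk.2, fun h k h1 h2 => h k ⟨h1, h2⟩⟩
  have hGmeas : ∀ k, 1 ≤ k → MeasurableSet (GoodSet A k) := fun k hk =>
    Falg_le A k _ (GoodSet_meas_Falg A hk)
  have hEmeas : MeasurableSet E := by
    rw [hEinter]
    exact Finset.measurableSet_biInter _ fun k hk => hGmeas k (Finset.mem_Icc.mp hk).1
  have hsubc : Eᶜ ⊆ (GoodSet A 1)ᶜ ∪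
      ⋃ j ∈ Finset.Icc 1 (t - 1), (GoodSet A j ∩ (GoodSet A (j + 1))ᶜ) := by
    intro ω hω
    have hex : ∃ k, (1 ≤ k ∧ k ≤ t) ∧ ω ∉ GoodSet A k := by
      simp only [Set.mem_compl_iff, hEdef, Set.mem_setOf_eq, not_forall] at hω
      obtain ⟨k, h1, h2, h3⟩ := hω
      exact ⟨k, ⟨h1, h2⟩, h3⟩
    obtain ⟨⟨hk01, hk0t⟩, hk0bad⟩ := Nat.find_spec hex
    set k0 := Nat.find hex with hk0
    rcases Nat.eq_or_lt_of_le hk01 with heq | hlt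
    · left
      rw [← heq] at hk0bad
      exact hk0bad
    · right
      have hj1 : 1 ≤ k0 - 1 := by omega
      have hgood : ω ∈ GoodSet A (k0 - 1) := by
        by_contra hc
        exact Nat.find_min hex (show k0 - 1 < k0 by omega) ⟨⟨hj1, by omega⟩, hc⟩
      refine Set.mem_iUnion₂.mpr ⟨k0 - 1, Finset.mem_Icc.mpr ⟨hj1, by omega⟩, hgood, ?_⟩
      show ω ∉ GoodSet A (k0 - 1 + 1)
      rw [show k0 - 1 + 1 = k0 by omega]
      exact hk0bad
  have hb1 := base_bound A hε hα
  have hbs : ∀ j ∈ Finset.Icc 1 (t - 1),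
      A.vol (GoodSet A j ∩ (GoodSet A (j + 1))ᶜ) ≤ ENNReal.ofReal (α / 2 ^ (j + 2)) :=
    fun j hj => step_bound A hε hα j (Finset.mem_Icc.mp hj).1
  have hα4 : (0 : ℝ) ≤ α / 4 := by linarith [hα.1]
  have hcompl_bound : A.vol Eᶜ ≤ ENNReal.ofReal α := by
    calc A.vol Eᶜ
        ≤ A.vol ((GoodSet A 1)ᶜ ∪
            ⋃ j ∈ Finset.Icc 1 (t - 1), (GoodSet A j ∩ (GoodSet A (j + 1))ᶜ)) :=
          measure_mono hsubc
      _ ≤ A.vol (GoodSet A 1)ᶜ +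
            A.vol (⋃ j ∈ Finset.Icc 1 (t - 1), (GoodSet A j ∩ (GoodSet A (j + 1))ᶜ)) :=
          measure_union_le _ _
      _ ≤ ENNReal.ofReal (α / 4) +
            ∑ j ∈ Finset.Icc 1 (t - 1), A.vol (GoodSet A j ∩ (GoodSet A (j + 1))ᶜ) :=
          add_le_add hb1 (measure_biUnion_finset_le _ _)
      _ ≤ ENNReal.ofReal (α / 4) +
            ∑ j ∈ Finset.Icc 1 (t - 1), ENNReal.ofReal (α / 2 ^ (j + 2)) :=
          add_le_add le_rfl (Finset.sum_le_sum hbs)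
      _ = ENNReal.ofReal (α / 4) +
            ENNReal.ofReal (∑ j ∈ Finset.Icc 1 (t - 1), α / 2 ^ (j + 2)) := by
          rw [ENNReal.ofReal_sum_of_nonneg fun j _ => div_nonneg hα.1.le (by positivity)]
      _ ≤ ENNReal.ofReal (α / 4) + ENNReal.ofReal (α / 4) := by
          refine add_le_add le_rfl (ENNReal.ofReal_le_ofReal ?_)
          refine le_trans (geom_sum_bound hα.1.le (t - 1)) ?_
          exact sub_le_self _ (div_nonneg hα.1.le (by positivity))
      _ = ENNReal.ofReal (α / 2) := by
          rw [← ENNReal.ofReal_add hα4 hα4]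
          congr 1
          ring
      _ ≤ ENNReal.ofReal α := ENNReal.ofReal_le_ofReal (by linarith [hα.1])
  have htoReal : (A.vol Eᶜ).toReal ≤ α := ENNReal.toReal_le_of_le_ofReal hα.1.le hcompl_bound
  have hsum : (A.vol E).toReal + (A.vol Eᶜ).toReal = 1 := by
    have h := measure_add_measure_compl (μ := A.vol) hEmeas
    rw [measure_univ] at h
    have h2 := congrArg ENNReal.toReal h
    rwa [ENNReal.toReal_add (measure_ne_top _ _) (measure_ne_top _ _), ENNReal.toReal_one] at h2
  linarith

end

end LocalStationary
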